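/- arXiv:math/0503045 — 6 statements merged into one kernel-verified Lean document; each statement's English description precedes it below -/
import Mathlib

section
/- Let Γ be a group. A finitely generated group G is fully residually Γ if and only if there exists a stable sequence of homomorphisms (h_n : G → Γ) whose stable kernel is trivial. -/
open Filter

universe uG

/-- A sequence of homomorphisms `h : ℕ → G →* Γ` is *stable* if for every `g ∈ G`,
either `h n g = 1` for all but finitely many `n`, or `h n g ≠ 1` for all but
finitely many `n`. -/
def StableSeq {G Γ : Type*} [Group G] [Group Γ] (h : ℕ → G →* Γ) : Prop :=
  ∀ g : G, (∀ᶠ n in atTop, h n g = 1) ∨ (∀ᶠ n in atTop, h n g ≠ 1)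

/-- The *stable kernel* of a sequence of homomorphisms: the set of `g ∈ G` such that
`h n g = 1` for all but finitely many `n`.  It is always a subgroup. -/
def stableKer {G Γ : Type*} [Group G] [Group Γ] (h : ℕ → G →* Γ) : Subgroup G where
  carrier := { g | ∀ᶠ n in atTop, h n g = 1 }
  one_mem' := Eventually.of_forall fun n => map_one (h n)
  mul_mem' := fun ha hb => (ha.and hb).mono fun n hn => by
    simp only [map_mul, hn.1, hn.2, one_mul]
  inv_mem' := fun ha => ha.mono fun n hn => by
    simp only [map_inv, hn, inv_one]

instance stableKer_normal {G Γ : Type*} [Group G] [Group Γ] (h : ℕ → G →* Γ) :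
    (stableKer h).Normal where
  conj_mem := fun x hx g => hx.mono fun n hn => by
    simp only [map_mul, map_inv, hn, mul_one, mul_inv_cancel]

/-- `q : G →* L` is a `Γ`-limit quotient of `G` if it is surjective and its kernel
is the stable kernel of some stable sequence of homomorphisms `G →* Γ`. -/
def IsLimitQuotient (Γ : Type*) [Group Γ] {G L : Type*} [Group G] [Group L]
    (q : G →* L) : Prop :=
  Function.Surjective q ∧ ∃ h : ℕ → G →* Γ, StableSeq h ∧ q.ker = stableKer h

/-- `L` is a `Γ`-limit group if it is (isomorphic to) a `Γ`-limit quotient of some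
finitely generated group. -/
def IsLimitGroup (Γ : Type*) [Group Γ] (L : Type*) [Group L] : Prop :=
  ∃ (G : GrpCat.{uG}) (q : G →* L), Group.FG G ∧ IsLimitQuotient Γ q

/-- The strict order on limit quotients of a fixed group `G`: `R₁ > R₂` iff there is an
epimorphism `τ : R₁ → R₂` with nontrivial kernel such that `q₂ = τ ∘ q₁`. -/
def QuotGT {G R₁ R₂ : Type*} [Group G] [Group R₁] [Group R₂]
    (q₁ : G →* R₁) (q₂ : G →* R₂) : Prop :=
  ∃ τ : R₁ →* R₂, Function.Surjective τ ∧ τ.ker ≠ ⊥ ∧ q₂ = τ.comp q₁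

/-- Two quotients of `G` are equivalent if they differ by an isomorphism commuting with the
quotient maps. -/
def QuotEquiv {G R₁ R₂ : Type*} [Group G] [Group R₁] [Group R₂]
    (q₁ : G →* R₁) (q₂ : G →* R₂) : Prop :=
  ∃ τ : R₁ ≃* R₂, ∀ g : G, τ (q₁ g) = q₂ g

/-- `G` is fully residually `Γ` if every finite subset of `G` is mapped injectively by
some homomorphism `G →* Γ`. -/
def FullyResidually (Γ : Type*) [Group Γ] (G : Type*) [Group G] : Prop :=
  ∀ F : Finset G, ∃ h : G →* Γ, Set.InjOn h ↑F

/-- `Γ` has the *factorization property* if for every finitely generated group `H` and every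
stable sequence `h : ℕ → H →* Γ` with stable kernel `K`, some subsequence of `h` consists of
homomorphisms factoring through `H ⧸ K`. -/
def FactorizationProperty (Γ : Type*) [Group Γ] : Prop :=
  ∀ (H : GrpCat.{uG}), Group.FG H → ∀ h : ℕ → H →* Γ, StableSeq h →
    ∃ φ : ℕ → ℕ, StrictMono φ ∧ ∀ t : ℕ,
      ∃ π : (H ⧸ stableKer h) →* Γ, h (φ t) = π.comp (QuotientGroup.mk' (stableKer h))

private lemma countable_of_fg {G : Type*} [Group G] [Group.FG G] : Countable G := by
  classical
  obtain ⟨S, hS⟩ := Group.FG.out (G := G)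
  have h := FreeGroup.range_lift_eq_closure (f := fun s : (S : Set G) => (s : G))
  rw [Subtype.range_coe, hS] at h
  have hsurj : Function.Surjective (FreeGroup.lift (fun s : (S : Set G) => (s : G))) := by
    rw [← MonoidHom.range_eq_top]; exact h
  have : Countable (S : Set G) := Finite.to_countable
  have : Countable (FreeGroup (S : Set G)) := FreeGroup.toWord_injective.countable
  exact hsurj.countable

/-- a finitely generated group `G` is fully residually `Γ` iff there is a
stable sequence of homomorphisms `G →* Γ` with trivial stable kernel. -/
theorem statement_2 {Γ G : Type*} [Group Γ] [Group G] [Group.FG G] :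
    FullyResidually Γ G ↔ ∃ h : ℕ → G →* Γ, StableSeq h ∧ stableKer h = ⊥ := by
  constructor
  · intro hFR
    classical
    have hcount : Countable G := countable_of_fg
    obtain ⟨e, he⟩ := exists_surjective_nat G
    choose h hinj using fun n : ℕ => hFR (insert 1 ((Finset.range (n + 1)).image e))
    have key : ∀ g : G, g ≠ 1 → ∀ᶠ n in atTop, h n g ≠ 1 := by
      intro g hg
      obtain ⟨k, rfl⟩ := he g
      filter_upwards [eventually_ge_atTop k] with n hn h1
      have hmem : e k ∈ ((insert 1 ((Finset.range (n + 1)).image e) : Finset G) : Set G) := by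
        simp only [Finset.coe_insert, Set.mem_insert_iff, Finset.mem_coe]
        exact Or.inr (Finset.mem_image.2 ⟨k, Finset.mem_range.2 (Nat.lt_succ_of_le hn), rfl⟩)
      have hone : (1 : G) ∈ ((insert 1 ((Finset.range (n + 1)).image e) : Finset G) : Set G) := by
        simp
      exact hg (hinj n hmem hone (by rw [h1, map_one]))
    refine ⟨h, fun g => ?_, ?_⟩
    · by_cases hg : g = 1
      · subst hg
        exact Or.inl (Eventually.of_forall fun n => map_one (h n))
      · exact Or.inr (key g hg)
    · ext g
      simp only [Subgroup.mem_bot]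
      constructor
      · intro hmem
        by_contra hg
        obtain ⟨n, hn1, hn2⟩ := (hmem.and (key g hg)).exists
        exact hn2 hn1
      · rintro rfl
        exact Eventually.of_forall fun n => map_one (h n)
  · rintro ⟨h, hstab, hker⟩ F
    have hev : ∀ᶠ n in atTop, ∀ a ∈ F, ∀ b ∈ F, a ≠ b → h n a ≠ h n b := by
      rw [Finset.eventually_all]
      intro a _
      rw [Finset.eventually_all]
      intro b _
      by_cases hab : a = b
      · exact Eventually.of_forall fun n hne => absurd hab hne
      · have hne1 : a * b⁻¹ ≠ 1 := by
          intro hcon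
          exact hab (by rwa [mul_inv_eq_one] at hcon)
        have hnotker : a * b⁻¹ ∉ stableKer h := by
          rw [hker, Subgroup.mem_bot]; exact hne1
        rcases hstab (a * b⁻¹) with h1 | h2
        · exact absurd h1 hnotker
        · filter_upwards [h2] with n hn _ heq
          exact hn (by rw [map_mul, map_inv, heq, mul_inv_cancel])
    obtain ⟨n, hn⟩ := hev.exists
    exact ⟨h n, fun a ha b hb hab =>
      by_contra fun hne => hn a (Finset.mem_coe.1 ha) b (Finset.mem_coe.1 hb) hne hab⟩
end

section
/- Suppose the group Γ has the factorization property. Then for every finitely generated group G and every Γ-limit quotient q : G → L of G, there exists a sequence of homomorphisms (ρ_t : L → Γ) that is stable and has trivial stable kernel. Consequently, every Γ-limit group is fully residually Γ. -/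
open Filter

universe uG

section Aux

universe u v w

lemma stableKer_eq_ker_comap {G Γ H : Type*} [Group G] [Group Γ] [Group H]
    (h : ℕ → G →* Γ) (p : H →* G) :
    stableKer (fun n => (h n).comp p) = (stableKer h).comap p := rfl

lemma exists_stable_trivial_ker {Γ : Type*} [Group Γ] (hfac : FactorizationProperty.{u} Γ)
    {G : Type v} {L : Type w} [Group G] [Group.FG G] [Group L]
    (q : G →* L) (hq : IsLimitQuotient Γ q) :
    ∃ ρ : ℕ → L →* Γ, StableSeq ρ ∧ stableKer ρ = ⊥ := by
  obtain ⟨hsurj, h, hstable, hker⟩ := hq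
  -- a surjection from a free group onto G
  obtain ⟨S, hScl, hSfin⟩ := (Group.fg_iff).mp ‹Group.FG G›
  haveI := hSfin.fintype
  set n := Fintype.card S with hn
  let e₀ : Fin n ≃ S := (Fintype.equivFin S).symm
  let f : Fin n → G := fun i => (e₀ i : G)
  have hrange : Set.range f = S := by
    ext x
    constructor
    · rintro ⟨i, rfl⟩; exact (e₀ i).2
    · intro hx; exact ⟨e₀.symm ⟨x, hx⟩, by simp [f]⟩
  let p₀ : FreeGroup (Fin n) →* G := FreeGroup.lift f
  have hp₀ : Function.Surjective p₀ := by
    rw [← MonoidHom.range_eq_top, FreeGroup.range_lift_eq_closure, hrange, hScl]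
  -- lift to universe u
  let H : Type u := ULift.{u} (FreeGroup (Fin n))
  let eH : H ≃* FreeGroup (Fin n) := MulEquiv.ulift
  let p : H →* G := p₀.comp eH.toMonoidHom
  have hp : Function.Surjective p := hp₀.comp eH.surjective
  haveI : Group.FG (FreeGroup (Fin n)) :=
    Group.fg_iff.mpr ⟨Set.range FreeGroup.of, FreeGroup.closure_range_of _, Set.finite_range _⟩
  haveI : Group.FG H := Group.fg_of_surjective (f := eH.symm.toMonoidHom) eH.symm.surjective
  -- apply the factorization property
  let h' : ℕ → H →* Γ := fun t => (h t).comp p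
  have hstable' : StableSeq h' := fun x => hstable (p x)
  obtain ⟨φ, hφ, hfact⟩ := hfac (GrpCat.of H) ‹Group.FG H› h' hstable'
  choose π hπ using hfact
  have hφt : Filter.Tendsto φ atTop atTop := hφ.tendsto_atTop
  -- identify H ⧸ stableKer h' with L
  have hK : stableKer h' = (q.comp p).ker := by
    rw [stableKer_eq_ker_comap, ← hker, ← MonoidHom.comap_ker]
  have hqp : Function.Surjective (q.comp p) := hsurj.comp hp
  let eL : (H ⧸ stableKer h') ≃* L :=
    (QuotientGroup.quotientMulEquivOfEq hK).trans
      (QuotientGroup.quotientKerEquivOfSurjective _ hqp)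
  have heL : ∀ x : H, eL (QuotientGroup.mk x) = q (p x) := fun x => rfl
  let ρ : ℕ → L →* Γ := fun t => (π t).comp eL.symm.toMonoidHom
  have key : ∀ (t : ℕ) (x : H), ρ t (q (p x)) = h (φ t) (p x) := by
    intro t x
    have h1 : eL.symm (q (p x)) = QuotientGroup.mk x := by
      rw [← heL x, MulEquiv.symm_apply_apply]
    have h2 := DFunLike.congr_fun (hπ t) x
    simp only [MonoidHom.comp_apply, QuotientGroup.mk'_apply] at h2
    simpa [ρ, h1, h'] using h2.symm
  refine ⟨ρ, ?_, ?_⟩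
  · intro l
    obtain ⟨x, rfl⟩ := hqp l
    rcases hstable (p x) with hc | hc
    · exact Or.inl (((hφt.eventually hc).mono fun t ht => by
        simpa [key t x] using ht))
    · exact Or.inr (((hφt.eventually hc).mono fun t ht => by
        simpa [key t x] using ht))
  · rw [Subgroup.eq_bot_iff_forall]
    intro l hl
    obtain ⟨x, rfl⟩ := hqp l
    have hl' : ∀ᶠ t in atTop, h (φ t) (p x) = 1 := hl.mono fun t ht => by
      simpa [key t x] using ht
    rcases hstable (p x) with hc | hc
    · have : p x ∈ q.ker := by rw [hker]; exact hc
      simpa [MonoidHom.mem_ker] using this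
    · obtain ⟨t, h1, h2⟩ := (hl'.and (hφt.eventually hc)).exists
      exact absurd h1 h2

lemma fullyResidually_of_stable {Γ L : Type*} [Group Γ] [Group L]
    (H : ∃ ρ : ℕ → L →* Γ, StableSeq ρ ∧ stableKer ρ = ⊥) :
    FullyResidually Γ L := by
  obtain ⟨ρ, hst, hker⟩ := H
  intro F
  have hev : ∀ᶠ n in atTop, ∀ a ∈ F, ∀ b ∈ F, a ≠ b → ρ n (a * b⁻¹) ≠ 1 := by
    rw [Filter.eventually_all_finset]
    intro a _
    rw [Filter.eventually_all_finset]
    intro b _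
    rcases eq_or_ne a b with rfl | hab
    · exact Filter.Eventually.of_forall fun n hn => absurd rfl hn
    · have h1 : a * b⁻¹ ∉ stableKer ρ := by
        rw [hker, Subgroup.mem_bot]
        intro hc
        exact hab (mul_inv_eq_one.mp hc)
      have := (hst (a * b⁻¹)).resolve_left h1
      exact this.mono fun n hn _ => hn
  obtain ⟨nn, hn⟩ := hev.exists
  refine ⟨ρ nn, fun a ha b hb hab => ?_⟩
  by_contra hne
  exact hn a ha b hb hne (by rw [map_mul, map_inv, hab, mul_inv_cancel])

end Aux

/-- if `Γ` has the factorization property, then for every finitely generated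
group `G` and every `Γ`-limit quotient `q : G →* L`, there is a stable sequence of
homomorphisms `L →* Γ` with trivial stable kernel; consequently every `Γ`-limit group is
fully residually `Γ`. -/
theorem statement_3 {Γ : Type*} [Group Γ] (hfac : FactorizationProperty Γ)
    {G L : Type*} [Group G] [Group.FG G] [Group L]
    (q : G →* L) (hq : IsLimitQuotient Γ q) :
    (∃ ρ : ℕ → L →* Γ, StableSeq ρ ∧ stableKer ρ = ⊥) ∧
    (∀ (L' : Type) [Group L'], IsLimitGroup Γ L' → FullyResidually Γ L') := by
  refine ⟨exists_stable_trivial_ker hfac q hq, ?_⟩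
  rintro L' _ ⟨G', q', hfg, hq'⟩
  haveI : Group.FG G' := hfg
  exact fullyResidually_of_stable (exists_stable_trivial_ker hfac q' hq')
end

section
/- Let F_d be the free group of rank d, Γ a group, (T_n) a sequence of groups with epimorphisms η_n : F_d → T_n satisfying ker η_1 ⊆ ker η_2 ⊆ ⋯, and (h_n : F_d → Γ) homomorphisms such that for every w ∈ F_d of reduced word length at most n, h_n(w) = 1 if and only if η_n(w) = 1. Then: (1) the sequence (h_n) is stable and its stable kernel equals ⋃_n ker η_n (so the associated Γ-limit quotient of F_d is the direct limit of the sequence F_d → T_1 → T_2 → ⋯); and (2) if in addition for every n there exists f ∈ F_d with η_{n+1}(f) = 1 and h_n(f) ≠ 1, then no h_n factors through the quotient map F_d → F_d / ⋃_n ker η_n. -/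
open Filter

universe uG

/-- let `F_d` be the free group of rank `d`, `η n : F_d →* T n` epimorphisms
with increasing kernels, and `h n : F_d →* Γ` homomorphisms such that elements of reduced
word length at most `n` are killed by `h n` exactly when they are killed by `η n`.  Then
(1) the sequence `h` is stable with stable kernel `⋃ n, ker (η n)` (so the associated
`Γ`-limit quotient of `F_d` is the direct limit of the `T n`), and (2) if moreover for
every `n` there is `f` with `η (n+1) f = 1` and `h n f ≠ 1`, then no `h n` factors
through the quotient of `F_d` by this stable kernel `⋃ n, ker (η n)`. -/
theorem statement_6 {Γ : Type*} [Group Γ] (d : ℕ)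
    (T : ℕ → GrpCat.{uG}) (η : ∀ n, FreeGroup (Fin d) →* T n)
    (hsurj : ∀ n, Function.Surjective (η n))
    (hmono : ∀ n, (η n).ker ≤ (η (n + 1)).ker)
    (h : ℕ → FreeGroup (Fin d) →* Γ)
    (hcompat : ∀ (n : ℕ) (w : FreeGroup (Fin d)), w.norm ≤ n →
      (h n w = 1 ↔ η n w = 1)) :
    (StableSeq h ∧
      (stableKer h : Set (FreeGroup (Fin d))) = ⋃ n, ((η n).ker : Set (FreeGroup (Fin d)))) ∧
    ((∀ n, ∃ f : FreeGroup (Fin d), η (n + 1) f = 1 ∧ h n f ≠ 1) →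
      ∀ n, ¬ ∃ π : (FreeGroup (Fin d) ⧸ stableKer h) →* Γ,
        h n = π.comp (QuotientGroup.mk' (stableKer h))) := by
  -- kernels are monotone
  have hmono' : ∀ {n m : ℕ}, n ≤ m → (η n).ker ≤ (η m).ker := by
    intro n m hnm
    induction hnm with
    | refl => exact le_rfl
    | step _ ih => exact le_trans ih (hmono _)
  -- membership in the union is equivalent to eventual triviality under h
  have key : ∀ w : FreeGroup (Fin d),
      (∀ᶠ n in atTop, h n w = 1) ↔ ∃ n, η n w = 1 := by
    intro w
    constructor
    · rintro hev
      rcases (hev.and (eventually_ge_atTop w.norm)).exists with ⟨n, h1, h2⟩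
      exact ⟨n, (hcompat n w h2).mp h1⟩
    · rintro ⟨n, hn⟩
      filter_upwards [eventually_ge_atTop (max n w.norm)] with m hm
      have : η m w = 1 := hmono' (le_trans (le_max_left _ _) hm) hn
      exact (hcompat m w (le_trans (le_max_right _ _) hm)).mpr this
  refine ⟨⟨?_, ?_⟩, ?_⟩
  · intro w
    by_cases hw : ∃ n, η n w = 1
    · exact Or.inl ((key w).mpr hw)
    · push_neg at hw
      right
      filter_upwards [eventually_ge_atTop w.norm] with m hm
      intro h1
      exact hw m ((hcompat m w hm).mp h1)
  · ext w
    simp only [SetLike.mem_coe, Set.mem_iUnion]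
    exact (key w).trans (by simp [MonoidHom.mem_ker])
  · intro hsep n ⟨π, hπ⟩
    rcases hsep n with ⟨f, hf1, hf2⟩
    have hmem : f ∈ stableKer h := (key f).mpr ⟨n + 1, hf1⟩
    have : h n f = 1 := by
      rw [hπ]
      simp [MonoidHom.comp_apply, (QuotientGroup.eq_one_iff f).mpr hmem]
    exact hf2 this
end

section
/- Let Γ be a group, n ≥ 1, and F_n the free group of rank n. Suppose: (i) every strictly descending sequence R_1 > R_2 > ⋯ of Γ-limit quotients of F_n is finite; and (ii) every finitely generated group H admits finitely many Γ-limit quotients η_1 : H → M_1, …, η_k : H → M_k such that every homomorphism from H to Γ factors through some η_i. Then every system of equations over Γ in n variables is equivalent to a finite subsystem: for every subset Σ ⊆ F_n there is a finite subset Σ' ⊆ Σ such that every homomorphism h : F_n → Γ with Σ' ⊆ ker h also satisfies Σ ⊆ ker h. -/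
open Filter

universe uG

section Aux

variable {Γ : Type*} [Group Γ] {n : ℕ}

instance : Countable (FreeGroup (Fin n)) := FreeGroup.toWord_injective.countable

instance : Group.FG (FreeGroup (Fin n)) :=
  ⟨⟨Finset.univ.image FreeGroup.of, by
    rw [Finset.coe_image, Finset.coe_univ, Set.image_univ, FreeGroup.closure_range_of]⟩⟩

lemma core_step
    (hmax : ∀ (H : GrpCat.{uG}), Group.FG H →
      ∃ (k : ℕ) (M : Fin k → GrpCat.{uG}) (η : ∀ i, H →* M i),
        (∀ i, IsLimitQuotient Γ (η i)) ∧
        ∀ f : H →* Γ, ∃ (i : Fin k) (g : M i →* Γ), f = g.comp (η i))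
    (h0 : ℕ → FreeGroup (Fin n) →* Γ)
    (N : Subgroup (FreeGroup (Fin n))) [hN : N.Normal]
    (A : Set ℕ) (hAinf : A.Infinite)
    (hA : ∀ m ∈ A, N ≤ (h0 m).ker) :
    ∃ (M : GrpCat.{uG}) (Q : FreeGroup (Fin n) →* M) (A' : Set ℕ),
      A' ⊆ A ∧ A'.Infinite ∧ IsLimitQuotient Γ Q ∧ N ≤ Q.ker ∧
      ∀ m ∈ A', Q.ker ≤ (h0 m).ker := by
  classical
  set H := FreeGroup (Fin n) ⧸ N with hHdef
  let ρ : FreeGroup (Fin n) →* ULift H :=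
    (MulEquiv.ulift.symm.toMonoidHom).comp (QuotientGroup.mk' N)
  have hρ : Function.Surjective ρ :=
    (MulEquiv.ulift.symm.surjective).comp (QuotientGroup.mk'_surjective N)
  have hFG : Group.FG (ULift H) := Group.fg_of_surjective hρ
  obtain ⟨k, M, η, hη, hfact⟩ := hmax (GrpCat.of (ULift H)) hFG
  have hind : ∀ m ∈ A, ∃ i : Fin k, ∃ g : (M i : Type uG) →* Γ,
      ∀ x, h0 m x = g (η i (ρ x)) := by
    intro m hm
    obtain ⟨i, g, hg⟩ := hfact
      ((QuotientGroup.lift N (h0 m) (hA m hm)).comp MulEquiv.ulift.toMonoidHom)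
    refine ⟨i, g, fun x => ?_⟩
    have h1 : h0 m x =
        ((QuotientGroup.lift N (h0 m) (hA m hm)).comp MulEquiv.ulift.toMonoidHom) (ρ x) := by
      simp only [ρ, MonoidHom.comp_apply, MulEquiv.coe_toMonoidHom, MulEquiv.apply_symm_apply]
      exact (QuotientGroup.lift_mk' _ _ _).symm
    rw [h1, hg]; rfl
  obtain ⟨m₀, hm₀⟩ := hAinf.nonempty
  haveI : Nonempty (Fin k) := ⟨(hind m₀ hm₀).choose⟩
  let c : ℕ → Fin k := fun m => if hm : m ∈ A then (hind m hm).choose else Classical.arbitrary _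
  have hpig : ∃ i : Fin k, {m ∈ A | c m = i}.Infinite := by
    by_contra hcon
    push_neg at hcon
    have hsub : A ⊆ ⋃ i : Fin k, {m ∈ A | c m = i} :=
      fun m hm => Set.mem_iUnion.2 ⟨c m, hm, rfl⟩
    exact hAinf ((Set.finite_iUnion fun i => hcon i).subset hsub)
  obtain ⟨i, hAi⟩ := hpig
  obtain ⟨hsurj, hseq, hst, hker⟩ := hη i
  refine ⟨M i, (η i).comp ρ, {m ∈ A | c m = i}, fun m hm => hm.1, hAi, ?_, ?_, ?_⟩
  · refine ⟨hsurj.comp hρ, fun t => (hseq t).comp ρ, fun x => hst (ρ x), ?_⟩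
    refine Subgroup.ext fun x => ?_
    rw [MonoidHom.mem_ker, MonoidHom.comp_apply, ← MonoidHom.mem_ker, hker]
    exact Iff.rfl
  · intro x hx
    have h1 : (QuotientGroup.mk' N) x = 1 := by
      rw [← MonoidHom.mem_ker, QuotientGroup.ker_mk']; exact hx
    have h2 : ρ x = 1 := by
      show MulEquiv.ulift.symm ((QuotientGroup.mk' N) x) = 1
      rw [h1, map_one]
    show ((η i).comp ρ) x = 1
    have h3 := congrArg (η i) h2
    rw [map_one] at h3
    exact h3
  · rintro m ⟨hmA, hci⟩ x hx
    have hc : (hind m hmA).choose = i := by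
      simpa [c, hmA] using hci
    obtain ⟨g, hg⟩ := (hind m hmA).choose_spec
    rw [MonoidHom.mem_ker] at hx ⊢
    subst hc
    have h4 : g ((η (hind m hmA).choose) (ρ x)) = g 1 := congrArg g hx
    rw [map_one] at h4
    exact (hg x).trans h4

lemma chain_step
    (hmax : ∀ (H : GrpCat.{uG}), Group.FG H →
      ∃ (k : ℕ) (M : Fin k → GrpCat.{uG}) (η : ∀ i, H →* M i),
        (∀ i, IsLimitQuotient Γ (η i)) ∧
        ∀ f : H →* Γ, ∃ (i : Fin k) (g : M i →* Γ), f = g.comp (η i))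
    (h0 : ℕ → FreeGroup (Fin n) →* Γ) (S : Set (FreeGroup (Fin n)))
    (hkill : ∀ w ∈ S, ∀ᶠ m in atTop, h0 m w = 1)
    (hwit : ∀ m : ℕ, ∃ w ∈ S, h0 m w ≠ 1)
    (M₀ : GrpCat.{uG}) (Q : FreeGroup (Fin n) →* M₀) (A : Set ℕ)
    (hAinf : A.Infinite) (hlq : IsLimitQuotient Γ Q)
    (hinv : ∀ m ∈ A, Q.ker ≤ (h0 m).ker) :
    ∃ (M' : GrpCat.{uG}) (Q' : FreeGroup (Fin n) →* M') (A' : Set ℕ),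
      A'.Infinite ∧ IsLimitQuotient Γ Q' ∧ (∀ m ∈ A', Q'.ker ≤ (h0 m).ker) ∧
      QuotGT Q Q' := by
  classical
  obtain ⟨m₀, hm₀⟩ := hAinf.nonempty
  obtain ⟨w, hwS, hw⟩ := hwit m₀
  have hwQ : w ∉ Q.ker := fun h => hw (hinv m₀ hm₀ h)
  set N : Subgroup (FreeGroup (Fin n)) := Q.ker ⊔ Subgroup.normalClosure {w} with hNdef
  haveI : N.Normal := Subgroup.sup_normal _ _
  obtain ⟨j, hj⟩ := eventually_atTop.mp (hkill w hwS)
  set B : Set ℕ := {m ∈ A | h0 m w = 1} with hBdef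
  have hBinf : B.Infinite := by
    refine (hAinf.diff (Set.finite_Iio j)).mono fun m hm => ?_
    exact ⟨hm.1, hj m (not_lt.mp hm.2)⟩
  have hB : ∀ m ∈ B, N ≤ (h0 m).ker := by
    rintro m ⟨hmA, hmw⟩
    refine sup_le (hinv m hmA) (Subgroup.normalClosure_le_normal ?_)
    intro x hx
    rw [Set.mem_singleton_iff] at hx
    subst hx
    exact hmw
  obtain ⟨M', Q', A', hA'B, hA'inf, hlq', hNle, hinv'⟩ := core_step hmax h0 N B hBinf hB
  refine ⟨M', Q', A', hA'inf, hlq', fun m hm => hinv' m hm, ?_⟩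
  have hle : Q.ker ≤ Q'.ker := le_trans le_sup_left hNle
  obtain ⟨hQs, -⟩ := hlq
  let e := QuotientGroup.quotientKerEquivOfSurjective Q hQs
  let τ : (M₀ : Type uG) →* M' := (QuotientGroup.lift Q.ker Q' hle).comp e.symm.toMonoidHom
  have hτQ : ∀ x, τ (Q x) = Q' x := by
    intro x
    have h1 : e.symm (Q x) = QuotientGroup.mk x := by
      apply e.injective
      rw [MulEquiv.apply_symm_apply]
      exact (QuotientGroup.kerLift_mk Q x).symm
    show (QuotientGroup.lift Q.ker Q' hle) (e.symm (Q x)) = Q' x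
    rw [h1]
    exact QuotientGroup.lift_mk' Q.ker hle x
  refine ⟨τ, ?_, ?_, ?_⟩
  · intro y
    obtain ⟨x, hx⟩ := hlq'.1 y
    exact ⟨Q x, by rw [hτQ, hx]⟩
  · intro hbot
    have hwN : w ∈ N :=
      Subgroup.mem_sup_right (Subgroup.subset_normalClosure (Set.mem_singleton w))
    have h1 : Q w ∈ τ.ker := by
      rw [MonoidHom.mem_ker, hτQ]
      exact hNle hwN
    rw [hbot, Subgroup.mem_bot] at h1
    exact hwQ h1
  · exact MonoidHom.ext fun x => (hτQ x).symm

end Aux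

/-- suppose (i) there is no infinite strictly descending sequence of
`Γ`-limit quotients of the free group `F_n`, and (ii) every finitely generated group `H`
admits finitely many `Γ`-limit quotients through which every homomorphism `H →* Γ`
factors.  Then every system of equations over `Γ` in `n` variables (a subset `S` of
`F_n`) is equivalent to a finite subsystem. -/
theorem statement_7 {Γ : Type*} [Group Γ] (n : ℕ) (hn : 1 ≤ n)
    (hdcc : ¬ ∃ (R : ℕ → GrpCat.{uG}) (q : ∀ i, FreeGroup (Fin n) →* R i),
      (∀ i, IsLimitQuotient Γ (q i)) ∧ ∀ i, QuotGT (q i) (q (i + 1)))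
    (hmax : ∀ (H : GrpCat.{uG}), Group.FG H →
      ∃ (k : ℕ) (M : Fin k → GrpCat.{uG}) (η : ∀ i, H →* M i),
        (∀ i, IsLimitQuotient Γ (η i)) ∧
        ∀ f : H →* Γ, ∃ (i : Fin k) (g : M i →* Γ), f = g.comp (η i))
    (S : Set (FreeGroup (Fin n))) :
    ∃ S₀ : Finset (FreeGroup (Fin n)), ↑S₀ ⊆ S ∧
      ∀ h : FreeGroup (Fin n) →* Γ, (∀ w ∈ S₀, h w = 1) → ∀ w ∈ S, h w = 1 := by
  classical
  by_contra hcon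
  push_neg at hcon
  obtain ⟨e, he⟩ := exists_surjective_nat (FreeGroup (Fin n))
  have hex : ∀ m : ℕ, ∃ h : FreeGroup (Fin n) →* Γ,
      (∀ w ∈ ((Finset.range m).image e).filter (· ∈ S), h w = 1) ∧ ∃ w ∈ S, h w ≠ 1 := by
    intro m
    obtain ⟨h, h1, w, hw1, hw2⟩ := hcon (((Finset.range m).image e).filter (· ∈ S))
      (fun x hx => (Finset.mem_filter.mp hx).2)
    exact ⟨h, h1, w, hw1, hw2⟩
  choose h0 hkill0 hwit using hex
  have hkill : ∀ w ∈ S, ∀ᶠ m in atTop, h0 m w = 1 := by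
    intro w hwS
    obtain ⟨j, hj⟩ := he w
    refine eventually_atTop.mpr ⟨j + 1, fun m hm => ?_⟩
    refine hkill0 m w (Finset.mem_filter.mpr ⟨Finset.mem_image.mpr ⟨j, ?_, hj⟩, hwS⟩)
    exact Finset.mem_range.mpr (Nat.lt_of_succ_le hm)
  obtain ⟨M0, Q0, A0, -, hA0inf, hlq0, -, hinv0⟩ :=
    core_step hmax h0 ⊥ Set.univ Set.infinite_univ (fun m _ => bot_le)
  have hstep : ∀ (M : GrpCat.{uG}) (Q : FreeGroup (Fin n) →* M) (A : Set ℕ),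
      A.Infinite → IsLimitQuotient Γ Q → (∀ m ∈ A, Q.ker ≤ (h0 m).ker) →
      ∃ (M' : GrpCat.{uG}) (Q' : FreeGroup (Fin n) →* M') (A' : Set ℕ),
        A'.Infinite ∧ IsLimitQuotient Γ Q' ∧ (∀ m ∈ A', Q'.ker ≤ (h0 m).ker) ∧
        QuotGT Q Q' :=
    fun M Q A hA hlq hinv => chain_step hmax h0 S hkill hwit M Q A hA hlq hinv
  -- build the chain
  let St := Σ (M : GrpCat.{uG}), (FreeGroup (Fin n) →* M) × Set ℕ
  let Good : St → Prop := fun s =>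
    s.2.2.Infinite ∧ IsLimitQuotient Γ s.2.1 ∧ ∀ m ∈ s.2.2, (s.2.1).ker ≤ (h0 m).ker
  have hstep' : ∀ s : St, Good s → ∃ s' : St, Good s' ∧ QuotGT s.2.1 s'.2.1 := by
    rintro ⟨M, Q, A⟩ ⟨hA, hlq, hinv⟩
    obtain ⟨M', Q', A', hA'inf, hlq', hinv', hgt⟩ := hstep M Q A hA hlq hinv
    exact ⟨⟨M', Q', A'⟩, ⟨hA'inf, hlq', hinv'⟩, hgt⟩
  let f : {s : St // Good s} → {s : St // Good s} := fun s =>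
    ⟨(hstep' s.1 s.2).choose, (hstep' s.1 s.2).choose_spec.1⟩
  have hf : ∀ s : {s : St // Good s}, QuotGT s.1.2.1 (f s).1.2.1 :=
    fun s => (hstep' s.1 s.2).choose_spec.2
  let s0 : {s : St // Good s} := ⟨⟨M0, Q0, A0⟩, hA0inf, hlq0, hinv0⟩
  let st : ℕ → {s : St // Good s} := fun t => f^[t] s0
  refine hdcc ⟨fun t => (st t).1.1, fun t => (st t).1.2.1, fun t => (st t).2.2.1, fun t => ?_⟩
  have hsucc : st (t + 1) = f (st t) := Function.iterate_succ_apply' f t s0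
  have hq := hf (st t)
  rw [← hsucc] at hq
  exact hq
end

section
/- Let L be a group in which every nontrivial abelian subgroup is malnormal. If H is a subgroup of L possessing an abelian normal subgroup E ⊴ H such that the quotient H/E is cyclic, then H is abelian. (In a group with malnormal abelian subgroups, every abelian-by-cyclic subgroup is abelian.) -/
/-- A subgroup is abelian if all of its elements commute. -/
def IsAbelianSubgroup {L : Type*} [Group L] (P : Subgroup L) : Prop :=
  ∀ x ∈ P, ∀ y ∈ P, x * y = y * x

/-- A subgroup `P ≤ L` is malnormal if `gPg⁻¹ ∩ P ≠ {1}` implies `g ∈ P`. -/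
def Malnormal {L : Type*} [Group L] (P : Subgroup L) : Prop :=
  ∀ g : L, (∃ x ∈ P, x ≠ 1 ∧ g * x * g⁻¹ ∈ P) → g ∈ P

/-- A maximal abelian subgroup: an abelian subgroup not properly contained in any abelian
subgroup. -/
def IsMaximalAbelian {L : Type*} [Group L] (M : Subgroup L) : Prop :=
  IsAbelianSubgroup M ∧ ∀ M' : Subgroup L, IsAbelianSubgroup M' → M ≤ M' → M' = M

/-- in a group `L` in which every nontrivial abelian subgroup is malnormal,
every abelian-by-cyclic subgroup is abelian: if `H ≤ L` has an abelian normal subgroup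
`E ⊴ H` with `H / E` cyclic, then `H` is abelian. -/
theorem statement_14 {L : Type*} [Group L]
    (hmal : ∀ P : Subgroup L, P ≠ ⊥ → IsAbelianSubgroup P → Malnormal P)
    (H : Subgroup L) (E : Subgroup ↥H) [E.Normal]
    (hE : IsAbelianSubgroup E) (hcyc : IsCyclic (↥H ⧸ E)) :
    IsAbelianSubgroup H := by
  by_cases hEbot : E = ⊥
  · -- then H ≅ H ⧸ ⊥ is cyclic, hence abelian
    subst hEbot
    haveI : IsCyclic ↥H :=
      isCyclic_of_surjective (QuotientGroup.quotientBot (G := ↥H)).toMonoidHom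
        (QuotientGroup.quotientBot (G := ↥H)).surjective
    letI := IsCyclic.commGroup (α := ↥H)
    intro x hx y hy
    exact congrArg Subtype.val (mul_comm (⟨x, hx⟩ : ↥H) ⟨y, hy⟩)
  · -- E is a nontrivial abelian subgroup of L (via the image), hence malnormal
    obtain ⟨e, hne⟩ := (Subgroup.ne_bot_iff_exists_ne_one).mp hEbot
    set E' : Subgroup L := E.map H.subtype with hE'def
    have hE'ab : IsAbelianSubgroup E' := by
      rintro _ ⟨a, ha, rfl⟩ _ ⟨b, hb, rfl⟩
      have := hE a ha b hb
      simpa using congrArg Subtype.val this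
    set x : L := ((e : ↥H) : L) with hxdef
    have hxE' : x ∈ E' := ⟨e, e.2, rfl⟩
    have hxne : x ≠ 1 := by
      intro hx1
      apply hne
      ext
      exact hx1
    have hE'bot : E' ≠ ⊥ := by
      intro hb
      exact hxne ((Subgroup.eq_bot_iff_forall E').mp hb x hxE')
    have mal := hmal E' hE'bot hE'ab
    have key : ∀ h ∈ H, h ∈ E' := by
      intro h hh
      refine mal h ⟨x, hxE', hxne, ?_⟩
      have hconj : (⟨h, hh⟩ : ↥H) * (e : ↥H) * (⟨h, hh⟩ : ↥H)⁻¹ ∈ E :=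
        Subgroup.Normal.conj_mem ‹E.Normal› (e : ↥H) e.2 ⟨h, hh⟩
      exact ⟨_, hconj, rfl⟩
    intro a ha b hb
    exact hE'ab a (key a ha) b (key b hb)
end

section
/- Let Γ be a group and suppose that for every d ≥ 1, every strictly descending sequence R_1 > R_2 > ⋯ of Γ-limit quotients of the free group F_d of rank d is finite. Then every Γ-limit group is Hopfian: every surjective endomorphism of a Γ-limit group is an isomorphism. -/
open Filter

universe uG

section Aux

lemma mem_stableKer_iff {G Γ : Type*} [Group G] [Group Γ] (h : ℕ → G →* Γ) (g : G) :
    g ∈ stableKer h ↔ ∀ᶠ n in atTop, h n g = 1 := Iff.rfl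

lemma aux_stable {G Γ F : Type*} [Group G] [Group Γ] [Group F]
    (h : ℕ → G →* Γ) (hs : StableSeq h) (r : F →* G) :
    StableSeq (fun n => (h n).comp r) := fun x => hs (r x)

lemma aux_ker {G Γ L F : Type*} [Group G] [Group Γ] [Group L] [Group F]
    (q : G →* L) (h : ℕ → G →* Γ) (hk : q.ker = stableKer h) (r : F →* G) :
    (q.comp r).ker = stableKer (fun n => (h n).comp r) := by
  ext x
  have h1 : x ∈ (q.comp r).ker ↔ r x ∈ q.ker := Iff.rfl
  rw [h1, hk]
  exact Iff.rfl

end Aux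

/-- if for every `d ≥ 1` there is no infinite strictly descending sequence of
`Γ`-limit quotients of the free group `F_d`, then every `Γ`-limit group is Hopfian. -/
theorem statement_15 {Γ : Type*} [Group Γ]
    (hdcc : ∀ d : ℕ, 1 ≤ d →
      ¬ ∃ (R : ℕ → GrpCat.{uG}) (q : ∀ i, FreeGroup (Fin d) →* R i),
        (∀ i, IsLimitQuotient Γ (q i)) ∧ ∀ i, QuotGT (q i) (q (i + 1))) :
    ∀ (L : Type) [Group L], IsLimitGroup Γ L →
      ∀ f : L →* L, Function.Surjective f → Function.Injective f := by
  intro L _ hL f hfsurj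
  by_contra hinj
  obtain ⟨G, q, hFG, hqsurj, h, hstable, hker⟩ := hL
  obtain ⟨S, hS⟩ := hFG.out
  -- a surjection from a free group of rank d ≥ 1
  set n := S.card with hn
  set d := n + 1 with hd
  set u : Fin d → G := fun i => if hi : (i : ℕ) < n then ((S.equivFin.symm ⟨i, hi⟩ : S) : G) else 1
    with hu
  set π : FreeGroup (Fin d) →* G := FreeGroup.lift u with hπ
  have hπsurj : Function.Surjective π := by
    rw [← MonoidHom.range_eq_top, hπ, FreeGroup.range_lift_eq_closure, eq_top_iff, ← hS]
    apply Subgroup.closure_le _ |>.2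
    intro s hs
    apply Subgroup.subset_closure
    refine ⟨⟨(S.equivFin ⟨s, hs⟩ : ℕ), ?_⟩, ?_⟩
    · exact lt_of_lt_of_le (S.equivFin ⟨s, hs⟩).isLt (Nat.le_succ n)
    · rw [hu]
      simp only []
      rw [dif_pos (S.equivFin ⟨s, hs⟩).isLt]
      rw [show (⟨(S.equivFin ⟨s, hs⟩ : ℕ), (S.equivFin ⟨s, hs⟩).isLt⟩ : Fin n)
            = S.equivFin ⟨s, hs⟩ from rfl]
      simp
  set q' : FreeGroup (Fin d) →* L := q.comp π with hq'
  have hq'surj : Function.Surjective q' := by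
    rw [hq']
    exact hqsurj.comp hπsurj
  have hfq'surj : Function.Surjective (f.comp q') := hfsurj.comp hq'surj
  -- the lift σ of f
  choose w hw using fun i : Fin d => hq'surj (f (q' (FreeGroup.of i)))
  set σ : FreeGroup (Fin d) →* FreeGroup (Fin d) := FreeGroup.lift w with hσ
  have hkey : q'.comp σ = f.comp q' := by
    apply FreeGroup.ext_hom
    intro a
    simp only [MonoidHom.comp_apply, hσ, FreeGroup.lift_apply_of]
    exact hw a
  -- iterated lifts
  set ρ : ℕ → (FreeGroup (Fin d) →* FreeGroup (Fin d)) :=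
    fun i => Nat.rec (MonoidHom.id _) (fun _ r => σ.comp r) i with hρ
  have hρsucc : ∀ i, ρ (i + 1) = σ.comp (ρ i) := fun i => rfl
  set Q : ℕ → (FreeGroup (Fin d) →* L) := fun i => q'.comp (ρ i) with hQ
  have hQsucc : ∀ i, Q (i + 1) = f.comp (Q i) := by
    intro i
    refine MonoidHom.ext fun x => ?_
    show q' (σ (ρ i x)) = f (q' (ρ i x))
    exact DFunLike.congr_fun hkey (ρ i x)
  have hQsurj : ∀ i, Function.Surjective (Q i) := by
    intro i
    induction i with
    | zero => exact hq'surj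
    | succ i ih =>
        rw [hQsucc i]
        exact hfsurj.comp ih
  -- each Q i is a limit quotient
  have hQlim : ∀ i, IsLimitQuotient Γ (Q i) := by
    intro i
    refine ⟨hQsurj i, fun m => (h m).comp (π.comp (ρ i)), ?_, ?_⟩
    · exact aux_stable h hstable _
    · have : Q i = q.comp (π.comp (ρ i)) := rfl
      rw [this]
      exact aux_ker q h hker _
  -- strict descent
  have hQgt : ∀ i, QuotGT (Q i) (Q (i + 1)) := by
    intro i
    refine ⟨f, hfsurj, ?_, hQsucc i⟩
    intro hbot
    exact hinj ((MonoidHom.ker_eq_bot_iff f).1 hbot)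
  -- lift to universe uG
  set e : ULift.{uG} L ≃* L := MulEquiv.ulift with he
  have hinjlift : ∀ i (x : FreeGroup (Fin d)),
      e.symm.toMonoidHom.comp (Q i) x = 1 ↔ Q i x = 1 := by
    intro i x
    simp
  refine hdcc d (Nat.le_add_left 1 n) ⟨fun _ => GrpCat.of (ULift.{uG} L),
    fun i => e.symm.toMonoidHom.comp (Q i), ?_, ?_⟩
  · intro i
    refine ⟨(MulEquiv.surjective e.symm).comp (hQsurj i),
      fun m => (h m).comp (π.comp (ρ i)), aux_stable h hstable _, ?_⟩
    have h1 : (e.symm.toMonoidHom.comp (Q i)).ker = (Q i).ker := by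
      ext x
      exact hinjlift i x
    rw [h1]
    have : Q i = q.comp (π.comp (ρ i)) := rfl
    rw [this]
    exact aux_ker q h hker _
  · intro i
    refine ⟨(e.symm.toMonoidHom.comp f).comp e.toMonoidHom, ?_, ?_, ?_⟩
    · exact ((MulEquiv.surjective e.symm).comp hfsurj).comp (MulEquiv.surjective e)
    · intro hbot
      apply hinj
      intro a b hab
      have : e.symm a * (e.symm b)⁻¹ ∈
          ((e.symm.toMonoidHom.comp f).comp e.toMonoidHom).ker := by
        rw [MonoidHom.mem_ker]
        simp [hab]
      rw [hbot, Subgroup.mem_bot] at this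
      have := congrArg e (mul_inv_eq_one.1 this)
      simpa using this
    · apply MonoidHom.ext
      intro x
      simp [hQsucc i, MonoidHom.comp_apply]
end
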